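/- arXiv:1307.2765 — 4 statements merged into one kernel-verified Lean document; each statement's English description precedes it below -/
import Mathlib

section
/- Let I be a filtered category, let F : I ⥤ SSet be a diagram of simplicial sets, let A be a simplicial set, and let c be a cocone on F with apex A such that every component c_i : F(i) ⟶ A is a Kan fibration. Then the induced morphism colim F ⟶ A from the colimit of F is a Kan fibration. -/
universe u

open CategoryTheory Simplicial CategoryTheory.Limits Opposite

/-- A morphism of simplicial sets is a Kan fibration if it has the right lifting property
with respect to all horn inclusions `Λ[n, k] ⟶ Δ[n]` with `n ≥ 1`, `0 ≤ k ≤ n`. -/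
def KanFibration {X Y : SSet.{u}} (f : X ⟶ Y) : Prop :=
  ∀ ⦃n : ℕ⦄, 1 ≤ n → ∀ k : Fin (n + 1), HasLiftingProperty (SSet.horn n k).ι f

namespace KanFibAux

variable {I : Type u} [SmallCategory I] [IsFiltered I]

lemma eq_at_stage {G : I ⥤ Type u} {t : Cocone G} (ht : IsColimit t) {i : I} {x y : G.obj i}
    (h : t.ι.app i x = t.ι.app i y) :
    ∃ (i' : I) (f : i ⟶ i'), G.map f x = G.map f y := by
  obtain ⟨j, f, g, hfg⟩ := (Types.FilteredColimit.isColimit_eq_iff G ht).mp h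
  refine ⟨IsFiltered.coeq f g, f ≫ IsFiltered.coeqHom f g, ?_⟩
  calc G.map (f ≫ IsFiltered.coeqHom f g) x
      = G.map (IsFiltered.coeqHom f g) (G.map f x) := FunctorToTypes.map_comp_apply _ _ _ _
    _ = G.map (IsFiltered.coeqHom f g) (G.map g y) := congrArg _ hfg
    _ = G.map (g ≫ IsFiltered.coeqHom f g) y := (FunctorToTypes.map_comp_apply _ _ _ _).symm
    _ = G.map (f ≫ IsFiltered.coeqHom f g) y := by rw [← IsFiltered.coeq_condition]

lemma eq_at_stage_finite {G : I ⥤ Type u} {t : Cocone G} (ht : IsColimit t) {i : I}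
    {J : Type} (s : Finset J) (x y : J → G.obj i)
    (h : ∀ p ∈ s, t.ι.app i (x p) = t.ι.app i (y p)) :
    ∃ (i' : I) (f : i ⟶ i'), ∀ p ∈ s, G.map f (x p) = G.map f (y p) := by
  classical
  induction s using Finset.induction_on with
  | empty => exact ⟨i, 𝟙 i, by simp⟩
  | @insert a s ha ih =>
    obtain ⟨i', f, hf⟩ := ih (fun p hp => h p (Finset.mem_insert_of_mem hp))
    have hxy : t.ι.app i' (G.map f (x a)) = t.ι.app i' (G.map f (y a)) := by
      show (G.map f ≫ t.ι.app i') (x a) = (G.map f ≫ t.ι.app i') (y a)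
      rw [t.w f]
      exact h a (Finset.mem_insert_self a s)
    obtain ⟨i'', g, hg⟩ := eq_at_stage ht hxy
    refine ⟨i'', f ≫ g, fun p hp => ?_⟩
    rcases Finset.mem_insert.mp hp with rfl | hp
    · rw [FunctorToTypes.map_comp_apply, FunctorToTypes.map_comp_apply, hg]
    · rw [FunctorToTypes.map_comp_apply, FunctorToTypes.map_comp_apply, hf p hp]


open SSet SimplexCategory in
/-- The underlying morphism in `SimplexCategory` of a simplex of a horn. -/
def ofHorn {m : ℕ} {k : Fin (m + 2)} {d : SimplexCategoryᵒᵖ}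
    (α : (Λ[m + 1, k] : SSet.{u}).obj d) : (⦋d.unop.len⦌ : SimplexCategory) ⟶ ⦋m + 1⦌ :=
  stdSimplex.objEquiv α.1

open SSet SimplexCategory in
lemma exists_missing {m : ℕ} {k : Fin (m + 2)} {d : SimplexCategoryᵒᵖ}
    (α : (Λ[m + 1, k] : SSet.{u}).obj d) :
    ∃ j, ¬j = k ∧ ∀ x, (ofHorn α).toOrderHom x ≠ j := by
  obtain ⟨f, hf'⟩ := α
  obtain ⟨f', rfl⟩ := stdSimplex.objEquiv.symm.surjective f
  rw [mem_horn_iff] at hf'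
  simp [ofHorn, ← Set.univ_subset_iff, Set.subset_def, stdSimplex.asOrderHom, not_or] at hf'
  exact hf'

open SSet SimplexCategory in
noncomputable def hornDesc (X : SSet.{u}) {m : ℕ} (k : Fin (m + 2))
    (z : ∀ j : Fin (m + 2), j ≠ k → X.obj (op ⦋m⦌))
    (hz : ∀ ⦃e : SimplexCategory⦄ (g₁ g₂ : e ⟶ ⦋m⦌) (j₁ j₂ : Fin (m + 2))
      (hj₁ : j₁ ≠ k) (hj₂ : j₂ ≠ k), g₁ ≫ δ j₁ = g₂ ≫ δ j₂ →
      X.map g₁.op (z j₁ hj₁) = X.map g₂.op (z j₂ hj₂)) :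
    (Λ[m + 1, k] : SSet.{u}) ⟶ X where
  app d := TypeCat.ofHom fun α =>
    X.map (factor_δ (ofHorn α) (exists_missing α).choose).op
      (z _ (exists_missing α).choose_spec.1)
  naturality d d' φ := by
    ext α
    change X.map (factor_δ (ofHorn ((Λ[m + 1, k] : SSet.{u}).map φ α)) _).op _
      = X.map φ (X.map (factor_δ (ofHorn α) _).op _)
    rw [← FunctorToTypes.map_comp_apply, ← Quiver.Hom.op_unop φ, ← op_comp]
    refine hz _ _ _ _ (exists_missing _).choose_spec.1 (exists_missing α).choose_spec.1 ?_
    rw [factor_δ_spec _ _ (exists_missing _).choose_spec.2, Category.assoc,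
      factor_δ_spec _ _ (exists_missing α).choose_spec.2]
    rfl

open SSet SimplexCategory in
lemma hornDesc_app_face (X : SSet.{u}) {m : ℕ} (k : Fin (m + 2))
    (z : ∀ j : Fin (m + 2), j ≠ k → X.obj (op ⦋m⦌))
    (hz : ∀ ⦃e : SimplexCategory⦄ (g₁ g₂ : e ⟶ ⦋m⦌) (j₁ j₂ : Fin (m + 2))
      (hj₁ : j₁ ≠ k) (hj₂ : j₂ ≠ k), g₁ ≫ δ j₁ = g₂ ≫ δ j₂ →
      X.map g₁.op (z j₁ hj₁) = X.map g₂.op (z j₂ hj₂))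
    (j : Fin (m + 2)) (hj : j ≠ k) :
    (hornDesc X k z hz).app (op ⦋m⦌) (horn.face k j hj) = z j hj := by
  change X.map (factor_δ (ofHorn (horn.face k j hj)) _).op _ = z j hj
  have h2 : X.map (𝟙 (⦋m⦌ : SimplexCategory)).op (z j hj) = z j hj := by
    rw [op_id, FunctorToTypes.map_id_apply]
  refine Eq.trans ?_ h2
  refine hz _ (𝟙 _) _ j (exists_missing _).choose_spec.1 hj ?_
  rw [factor_δ_spec _ _ (exists_missing (horn.face k j hj)).choose_spec.2, Category.id_comp]
  rfl

open SSet SimplexCategory in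
lemma hornDesc_fac {X Y : SSet.{u}} {m : ℕ} {k : Fin (m + 2)}
    (z : ∀ j : Fin (m + 2), j ≠ k → X.obj (op ⦋m⦌))
    (hz : ∀ ⦃e : SimplexCategory⦄ (g₁ g₂ : e ⟶ ⦋m⦌) (j₁ j₂ : Fin (m + 2))
      (hj₁ : j₁ ≠ k) (hj₂ : j₂ ≠ k), g₁ ≫ δ j₁ = g₂ ≫ δ j₂ →
      X.map g₁.op (z j₁ hj₁) = X.map g₂.op (z j₂ hj₂))
    (q : X ⟶ Y) (u : (Λ[m + 1, k] : SSet.{u}) ⟶ Y)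
    (hq : ∀ (j) (hj : j ≠ k), q.app (op ⦋m⦌) (z j hj) = u.app (op ⦋m⦌) (horn.face k j hj)) :
    hornDesc X k z hz ≫ q = u := by
  refine horn.hom_ext _ _ (fun j hj => ?_)
  change q.app _ ((hornDesc X k z hz).app _ (horn.face k j hj)) = _
  rw [hornDesc_app_face]
  exact hq j hj

open SSet SimplexCategory in
lemma horn_factor (F : I ⥤ SSet.{u}) {m : ℕ} {k : Fin (m + 2)}
    (u : (Λ[m + 1, k] : SSet.{u}) ⟶ colimit F) :
    ∃ (i : I) (w : (Λ[m + 1, k] : SSet.{u}) ⟶ F.obj i), w ≫ colimit.ι F i = u := by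
  classical
  have E : ∀ d : SimplexCategoryᵒᵖ,
      IsColimit (((evaluation SimplexCategoryᵒᵖ (Type u)).obj d).mapCocone
        (colimit.cocone F)) :=
    fun d => isColimitOfPreserves _ (colimit.isColimit F)
  -- find a stage containing all the faces of `u`
  have h1 : ∀ j : Fin (m + 2), ∃ (i : I) (y : (F.obj i).obj (op ⦋m⦌)),
      ∀ hj : j ≠ k, (colimit.ι F i).app (op ⦋m⦌) y = u.app (op ⦋m⦌) (horn.face k j hj) := by
    intro j
    by_cases hj : j = k
    · obtain ⟨j₀, hj₀⟩ := exists_ne k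
      obtain ⟨i, y, hy⟩ := Types.jointly_surjective _ (E (op ⦋m⦌))
        (u.app (op ⦋m⦌) (horn.face k j₀ hj₀))
      exact ⟨i, y, fun h => absurd hj h⟩
    · obtain ⟨i, y, hy⟩ := Types.jointly_surjective _ (E (op ⦋m⦌))
        (u.app (op ⦋m⦌) (horn.face k j hj))
      exact ⟨i, y, fun _ => hy⟩
  choose io yo hyo using h1
  obtain ⟨S, hS⟩ := IsFiltered.sup_objs_exists (Finset.univ.image io)
  have t : ∀ j, io j ⟶ S := fun j =>
    (hS (Finset.mem_image_of_mem io (Finset.mem_univ j))).some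
  set z : ∀ j : Fin (m + 2), j ≠ k → (F.obj S).obj (op ⦋m⦌) :=
    fun j _ => (F.map (t j)).app (op ⦋m⦌) (yo j) with hzdef
  have hz1 : ∀ (j) (hj : j ≠ k),
      (colimit.ι F S).app (op ⦋m⦌) (z j hj) = u.app (op ⦋m⦌) (horn.face k j hj) := by
    intro j hj
    calc (colimit.ι F S).app (op ⦋m⦌) ((F.map (t j)).app (op ⦋m⦌) (yo j))
        = (F.map (t j) ≫ colimit.ι F S).app (op ⦋m⦌) (yo j) := rfl
      _ = (colimit.ι F (io j)).app (op ⦋m⦌) (yo j) := by rw [colimit.w]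
      _ = u.app (op ⦋m⦌) (horn.face k j hj) := hyo j hj
  rcases m with _ | m
  · -- the 1-dimensional case: there are no compatibilities to check
    refine ⟨S, hornDesc _ k z ?_, hornDesc_fac _ _ _ _ hz1⟩
    intro e g₁ g₂ j₁ j₂ hj₁ hj₂ hcomm
    have hj : j₁ = j₂ := by
      have h₁ := Fin.val_ne_of_ne hj₁
      have h₂ := Fin.val_ne_of_ne hj₂
      have := j₁.isLt; have := j₂.isLt; have := k.isLt
      exact Fin.ext (by omega)
    subst hj
    obtain rfl : g₁ = g₂ := (cancel_mono (δ _)).mp hcomm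
    rfl
  · -- find a further stage where the simplicial identities among the faces hold
    let P := {p : Fin (m + 3) × Fin (m + 3) // p.1 < p.2 ∧ p.1 ≠ k ∧ p.2 ≠ k}
    let a : P → Fin (m + 2) := fun p => p.1.1.castPred (Fin.ne_last_of_lt p.2.1)
    let b : P → Fin (m + 2) := fun p => p.1.2.pred (Fin.ne_zero_of_lt p.2.1)
    let xf : P → (F.obj S).obj (op ⦋m⦌) := fun p =>
      (F.obj S).map (δ (b p)).op (z p.1.1 p.2.2.1)
    let yf : P → (F.obj S).obj (op ⦋m⦌) := fun p =>
      (F.obj S).map (δ (a p)).op (z p.1.2 p.2.2.2)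
    have hfaceeq : ∀ p : P,
        (Λ[m + 2, k] : SSet.{u}).map (δ (b p)).op (horn.face k p.1.1 p.2.2.1)
          = (Λ[m + 2, k] : SSet.{u}).map (δ (a p)).op (horn.face k p.1.2 p.2.2.2) := by
      intro p
      apply Subtype.ext
      show Δ[m + 2].map (δ (b p)).op (horn.face k p.1.1 p.2.2.1).1
        = Δ[m + 2].map (δ (a p)).op (horn.face k p.1.2 p.2.2.2).1
      have hA : (a p).castSucc = p.1.1 := Fin.castSucc_castPred _ _
      have hB : (b p).succ = p.1.2 := Fin.succ_pred _ _
      have hAB : a p ≤ b p := by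
        have h1 := Fin.lt_def.mp p.2.1
        rw [Fin.le_def]
        simp only [a, b, Fin.coe_castPred, Fin.coe_pred]
        omega
      change Δ[m + 2].map (δ (b p)).op (stdSimplex.objEquiv.symm (δ p.1.1))
        = Δ[m + 2].map (δ (a p)).op (stdSimplex.objEquiv.symm (δ p.1.2))
      rw [stdSimplex.map_objEquiv_symm, stdSimplex.map_objEquiv_symm]
      simp only [Quiver.Hom.unop_op]
      congr 1
      rw [← hA, ← hB]
      exact (δ_comp_δ hAB).symm
    have hcolim : ∀ p : P, (colimit.ι F S).app (op ⦋m⦌) (xf p)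
        = (colimit.ι F S).app (op ⦋m⦌) (yf p) := by
      intro p
      calc (colimit.ι F S).app (op ⦋m⦌) ((F.obj S).map (δ (b p)).op (z p.1.1 p.2.2.1))
          = (colimit F).map (δ (b p)).op
              ((colimit.ι F S).app (op ⦋m + 1⦌) (z p.1.1 p.2.2.1)) :=
            ConcreteCategory.congr_hom ((colimit.ι F S).naturality (δ (b p)).op) _
        _ = (colimit F).map (δ (b p)).op
              (u.app (op ⦋m + 1⦌) (horn.face k p.1.1 p.2.2.1)) := by rw [hz1]
        _ = u.app (op ⦋m⦌)
              ((Λ[m + 2, k] : SSet.{u}).map (δ (b p)).op (horn.face k p.1.1 p.2.2.1)) :=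
            (ConcreteCategory.congr_hom (u.naturality (δ (b p)).op) _).symm
        _ = u.app (op ⦋m⦌)
              ((Λ[m + 2, k] : SSet.{u}).map (δ (a p)).op (horn.face k p.1.2 p.2.2.2)) := by
            rw [hfaceeq p]
        _ = (colimit F).map (δ (a p)).op
              (u.app (op ⦋m + 1⦌) (horn.face k p.1.2 p.2.2.2)) :=
            ConcreteCategory.congr_hom (u.naturality (δ (a p)).op) _
        _ = (colimit F).map (δ (a p)).op
              ((colimit.ι F S).app (op ⦋m + 1⦌) (z p.1.2 p.2.2.2)) := by rw [hz1]
        _ = (colimit.ι F S).app (op ⦋m⦌) ((F.obj S).map (δ (a p)).op (z p.1.2 p.2.2.2)) :=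
            (ConcreteCategory.congr_hom ((colimit.ι F S).naturality (δ (a p)).op) _).symm
    obtain ⟨i', f, hf⟩ := eq_at_stage_finite (E (op ⦋m⦌)) Finset.univ xf yf
      (fun p _ => hcolim p)
    set z' : ∀ j : Fin (m + 3), j ≠ k → (F.obj i').obj (op ⦋m + 1⦌) :=
      fun j hj => (F.map f).app (op ⦋m + 1⦌) (z j hj) with hz'def
    have hz1' : ∀ (j) (hj : j ≠ k),
        (colimit.ι F i').app (op ⦋m + 1⦌) (z' j hj) = u.app (op ⦋m + 1⦌) (horn.face k j hj) := by
      intro j hj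
      calc (colimit.ι F i').app _ ((F.map f).app _ (z j hj))
          = (F.map f ≫ colimit.ι F i').app (op ⦋m + 1⦌) (z j hj) := rfl
        _ = (colimit.ι F S).app (op ⦋m + 1⦌) (z j hj) := by rw [colimit.w]
        _ = _ := hz1 j hj
    have hcompat : ∀ p : P, (F.obj i').map (δ (b p)).op (z' p.1.1 p.2.2.1)
        = (F.obj i').map (δ (a p)).op (z' p.1.2 p.2.2.2) := by
      intro p
      calc (F.obj i').map (δ (b p)).op (z' p.1.1 p.2.2.1)
          = (F.map f).app (op ⦋m⦌) ((F.obj S).map (δ (b p)).op (z p.1.1 p.2.2.1)) :=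
            (ConcreteCategory.congr_hom ((F.map f).naturality (δ (b p)).op) _).symm
        _ = (F.map f).app (op ⦋m⦌) ((F.obj S).map (δ (a p)).op (z p.1.2 p.2.2.2)) :=
            hf p (Finset.mem_univ p)
        _ = (F.obj i').map (δ (a p)).op (z' p.1.2 p.2.2.2) :=
            ConcreteCategory.congr_hom ((F.map f).naturality (δ (a p)).op) _
    refine ⟨i', hornDesc _ k z' ?_, hornDesc_fac _ _ _ _ hz1'⟩
    have aux : ∀ (j₁ j₂ : Fin (m + 3)) (hlt : j₁ < j₂) (hj₁ : j₁ ≠ k) (hj₂ : j₂ ≠ k)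
        (e : SimplexCategory) (g₁ g₂ : e ⟶ ⦋m + 1⦌),
        g₁ ≫ δ j₁ = g₂ ≫ δ j₂ →
        (F.obj i').map g₁.op (z' j₁ hj₁) = (F.obj i').map g₂.op (z' j₂ hj₂) := by
      intro j₁ j₂ hlt hj₁ hj₂ e g₁ g₂ hcomm
      have hA : (j₁.castPred (Fin.ne_last_of_lt hlt)).castSucc = j₁ :=
        Fin.castSucc_castPred _ _
      have hB : (j₂.pred (Fin.ne_zero_of_lt hlt)).succ = j₂ := Fin.succ_pred _ _
      set A := j₁.castPred (Fin.ne_last_of_lt hlt) with hAdef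
      set B := j₂.pred (Fin.ne_zero_of_lt hlt) with hBdef
      have hAB : A ≤ B := by
        have h1 := Fin.lt_def.mp hlt
        rw [Fin.le_def]
        simp only [hAdef, hBdef, Fin.coe_castPred, Fin.coe_pred]
        omega
      have helt : ∀ x, j₁.succAbove (g₁.toOrderHom x) = j₂.succAbove (g₂.toOrderHom x) :=
        fun x => congrArg (fun q => q.toOrderHom x) hcomm
      have hg₁ : ∀ x, g₁.toOrderHom x ≠ B := by
        intro x hx
        refine Fin.succAbove_ne j₂ (g₂.toOrderHom x) ?_
        rw [← helt x, hx, Fin.succAbove_of_le_castSucc _ _ ?_, hB]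
        rw [Fin.le_def, Fin.coe_castSucc, hBdef, Fin.coe_pred]
        have h1 := Fin.lt_def.mp hlt
        omega
      have hg₂ : ∀ x, g₂.toOrderHom x ≠ A := by
        intro x hx
        refine Fin.succAbove_ne j₁ (g₁.toOrderHom x) ?_
        rw [helt x, hx, Fin.succAbove_of_castSucc_lt _ _ ?_, hA]
        rw [hA]
        exact hlt
      have hw₁ : @factor_δ e.len m g₁ B ≫ δ B = g₁ :=
        @factor_δ_spec e.len m g₁ B hg₁
      have hw₂ : @factor_δ e.len m g₂ A ≫ δ A = g₂ :=
        @factor_δ_spec e.len m g₂ A hg₂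
      have hδ : δ B ≫ δ j₁ = δ A ≫ δ j₂ := by
        rw [← hA, ← hB]
        exact (δ_comp_δ hAB).symm
      have hww : @factor_δ e.len m g₁ B = @factor_δ e.len m g₂ A := by
        have hmono : Mono (δ A ≫ δ j₂) := mono_comp _ _
        apply (cancel_mono (δ A ≫ δ j₂)).mp
        conv_lhs => rw [← hδ, ← Category.assoc, hw₁]
        conv_rhs => rw [← Category.assoc, hw₂]
        exact hcomm
      calc (F.obj i').map g₁.op (z' j₁ hj₁)
          = (F.obj i').map (@factor_δ e.len m g₁ B ≫ δ B).op (z' j₁ hj₁) := by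
            conv_lhs => rw [← hw₁]
        _ = (F.obj i').map (@factor_δ e.len m g₁ B).op
              ((F.obj i').map (δ B).op (z' j₁ hj₁)) := by
            rw [op_comp, FunctorToTypes.map_comp_apply]
        _ = (F.obj i').map (@factor_δ e.len m g₂ A).op
              ((F.obj i').map (δ A).op (z' j₂ hj₂)) := by
            rw [hww]
            exact congrArg _ (hcompat ⟨(j₁, j₂), hlt, hj₁, hj₂⟩)
        _ = (F.obj i').map (@factor_δ e.len m g₂ A ≫ δ A).op (z' j₂ hj₂) := by
            rw [op_comp, FunctorToTypes.map_comp_apply]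
        _ = (F.obj i').map g₂.op (z' j₂ hj₂) := by conv_lhs => rw [hw₂]
    intro e g₁ g₂ j₁ j₂ hj₁ hj₂ hcomm
    rcases lt_trichotomy j₁ j₂ with hlt | heq | hgt
    · exact aux j₁ j₂ hlt hj₁ hj₂ e g₁ g₂ hcomm
    · cases heq
      obtain rfl : g₁ = g₂ := (cancel_mono (δ _)).mp hcomm
      rfl
    · exact (aux j₂ j₁ hgt hj₂ hj₁ e g₂ g₁ hcomm.symm).symm

end KanFibAux

/-- If `c` is a cocone on a filtered diagram of simplicial sets all of whose components
are Kan fibrations, then the induced morphism from the colimit is a Kan fibration. -/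
theorem kanFibration_colimit_desc_of_filtered {I : Type u} [SmallCategory I] [IsFiltered I]
    (F : I ⥤ SSet.{u}) (c : Cocone F) (hc : ∀ i : I, KanFibration (c.ι.app i)) :
    KanFibration (colimit.desc F c) := by
  intro n hn k
  obtain ⟨m, rfl⟩ : ∃ m, n = m + 1 := ⟨n - 1, by omega⟩
  constructor
  intro f g sq
  obtain ⟨i, w, hw⟩ := KanFibAux.horn_factor F f
  have sq' : CommSq w (SSet.horn (m + 1) k).ι (c.ι.app i) g := by
    constructor
    rw [← colimit.ι_desc c i, ← Category.assoc, hw, sq.w]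
  haveI := (hc i) (show 1 ≤ m + 1 by omega) k
  exact CommSq.HasLift.mk'
    { l := sq'.lift ≫ colimit.ι F i
      fac_left := by rw [← Category.assoc, sq'.fac_left, hw]
      fac_right := by rw [Category.assoc, colimit.ι_desc, sq'.fac_right] }
end

section
/- Let I be a filtered category, let F, G : I ⥤ SSet be diagrams of simplicial sets such that every F(i) and every G(i) is a Kan complex, and let η : F ⟶ G be a natural transformation each of whose components η_i : F(i) ⟶ G(i) is a Kan fibration. Then the induced morphism colim F ⟶ colim G between the colimits is a Kan fibration. -/
universe u

open CategoryTheory Simplicial CategoryTheory.Limits Opposite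

instance instSubsingletonDeltaZeroObj (m : SimplexCategoryᵒᵖ) : Subsingleton (Δ[0].obj m) where
  allEq a b := by
    apply SSet.stdSimplex.objEquiv.injective
    apply SimplexCategory.Hom.ext
    ext x
    simp [Fin.val_eq_zero]

/-- The unique morphism from a simplicial set to the terminal simplicial set `Δ[0]`. -/
def SSet.ptMap (X : SSet.{u}) : X ⟶ Δ[0] where
  app _ := TypeCat.ofHom fun _ => SSet.stdSimplex.objMk (OrderHom.const _ 0)
  naturality _ _ _ := by ext; apply Subsingleton.elim

/-- A simplicial set is a Kan complex if the unique morphism to `Δ[0]` is a Kan fibration. -/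
def IsKanComplex (X : SSet.{u}) : Prop := KanFibration (SSet.ptMap X)

namespace KanColimAux

open SSet SimplexCategory

variable {I : Type u} [SmallCategory I] [IsFiltered I]

lemma ι_push (F : I ⥤ SSet.{u}) {i i' : I} (f : i ⟶ i') (E : SimplexCategoryᵒᵖ)
    (z : (F.obj i).obj E) :
    (colimit.ι F i').app E ((F.map f).app E z) = (colimit.ι F i).app E z := by
  conv_rhs => rw [← colimit.w F f]
  rfl

lemma exists_rep (F : I ⥤ SSet.{u}) (E : SimplexCategoryᵒᵖ) (x : (colimit F).obj E) :
    ∃ (i : I) (y : (F.obj i).obj E), (colimit.ι F i).app E y = x := by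
  obtain ⟨i, y, hy⟩ := Types.jointly_surjective'
    ((colimitObjIsoColimitCompEvaluation F E).hom x)
  refine ⟨i, y, (colimitObjIsoColimitCompEvaluation F E).toEquiv.injective ?_⟩
  have h := ConcreteCategory.congr_hom (colimitObjIsoColimitCompEvaluation_ι_app_hom F i E) y
  exact h.trans hy

lemma exists_push_eq (F : I ⥤ SSet.{u}) {i : I} {E : SimplexCategoryᵒᵖ}
    {x y : (F.obj i).obj E}
    (h : (colimit.ι F i).app E x = (colimit.ι F i).app E y) :
    ∃ (i' : I) (f : i ⟶ i'), (F.map f).app E x = (F.map f).app E y := by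
  have h' : colimit.ι (F ⋙ (evaluation _ _).obj E) i x
      = colimit.ι (F ⋙ (evaluation _ _).obj E) i y := by
    have hx := ConcreteCategory.congr_hom (colimitObjIsoColimitCompEvaluation_ι_app_hom F i E) x
    have hy := ConcreteCategory.congr_hom (colimitObjIsoColimitCompEvaluation_ι_app_hom F i E) y
    dsimp at hx hy
    rw [← hx, ← hy, h]
  rw [Types.FilteredColimit.colimit_eq_iff] at h'
  obtain ⟨l, f, g, hfg⟩ := h'
  refine ⟨IsFiltered.coeq f g, f ≫ IsFiltered.coeqHom f g, ?_⟩
  have hc : f ≫ IsFiltered.coeqHom f g = g ≫ IsFiltered.coeqHom f g :=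
    IsFiltered.coeq_condition f g
  calc (F.map (f ≫ IsFiltered.coeqHom f g)).app E x
      = (F.map (IsFiltered.coeqHom f g)).app E ((F.map f).app E x) := by
        rw [F.map_comp]; rfl
    _ = (F.map (IsFiltered.coeqHom f g)).app E ((F.map g).app E y) := by
        exact congrArg _ hfg
    _ = (F.map (g ≫ IsFiltered.coeqHom f g)).app E y := by rw [F.map_comp]; rfl
    _ = (F.map (f ≫ IsFiltered.coeqHom f g)).app E y := by rw [hc]

lemma exists_push_eq_fin (F : I ⥤ SSet.{u}) (E : SimplexCategoryᵒᵖ) (N : ℕ) :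
    ∀ (i : I) (x y : Fin N → (F.obj i).obj E),
      (∀ t, (colimit.ι F i).app E (x t) = (colimit.ι F i).app E (y t)) →
      ∃ (i' : I) (f : i ⟶ i'),
        ∀ t, (F.map f).app E (x t) = (F.map f).app E (y t) := by
  induction N with
  | zero => exact fun i x y _ => ⟨i, 𝟙 i, fun t => t.elim0⟩
  | succ N ih =>
    intro i x y h
    obtain ⟨i₁, f₁, hf₁⟩ := exists_push_eq F (h 0)
    obtain ⟨i₂, f₂, hf₂⟩ := ih i₁ (fun t => (F.map f₁).app E (x t.succ))
      (fun t => (F.map f₁).app E (y t.succ)) (by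
        intro t
        rw [ι_push, ι_push]
        exact h t.succ)
    refine ⟨i₂, f₁ ≫ f₂, ?_⟩
    intro t
    have hcomp : ∀ z, (F.map (f₁ ≫ f₂)).app E z = (F.map f₂).app E ((F.map f₁).app E z) := by
      intro z; rw [F.map_comp]; rfl
    rcases Fin.eq_zero_or_eq_succ t with rfl | ⟨s, rfl⟩
    · rw [hcomp, hcomp, hf₁]
    · rw [hcomp, hcomp]; exact hf₂ s

lemma exists_rep_fin (F : I ⥤ SSet.{u}) (E : SimplexCategoryᵒᵖ) (N : ℕ) :
    ∀ (y : Fin N → (colimit F).obj E),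
      ∃ (i : I) (x : Fin N → (F.obj i).obj E),
        ∀ t, (colimit.ι F i).app E (x t) = y t := by
  induction N with
  | zero =>
    obtain ⟨i⟩ := IsFiltered.nonempty (C := I)
    exact fun y => ⟨i, fun t => t.elim0, fun t => t.elim0⟩
  | succ N ih =>
    intro y
    obtain ⟨i₁, x₁, hx₁⟩ := exists_rep F E (y 0)
    obtain ⟨i₂, x₂, hx₂⟩ := ih (fun t => y t.succ)
    refine ⟨IsFiltered.max i₁ i₂,
      Fin.cases ((F.map (IsFiltered.leftToMax i₁ i₂)).app E x₁)
        (fun t => (F.map (IsFiltered.rightToMax i₁ i₂)).app E (x₂ t)), ?_⟩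
    intro t
    rcases Fin.eq_zero_or_eq_succ t with rfl | ⟨s, rfl⟩
    · simpa [ι_push] using hx₁
    · simpa [ι_push] using hx₂ s

end KanColimAux

namespace KanColimAux
open SSet SimplexCategory

lemma yonedaEquiv_comp {X Y : SSet.{u}} (n : SimplexCategory)
    (g : stdSimplex.obj n ⟶ X) (f : X ⟶ Y) :
    SSet.yonedaEquiv (g ≫ f) = f.app (op n) (SSet.yonedaEquiv g) := rfl

lemma delta_key {m : ℕ} (a b : Fin (m+2)) (j j' : Fin (m+3)) (hj : (a : ℕ) = j)
    (hj' : (b : ℕ) + 1 = j') (hab : a ≤ b) :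
    δ a ≫ δ j' = δ b ≫ δ j := by
  have h1 : j' = b.succ := by ext; simp [← hj']
  have h2 : j = a.castSucc := by ext; simp [← hj]
  rw [h1, h2]
  exact δ_comp_δ hab

-- test general-source factor_δ
example (E : SimplexCategoryᵒᵖ) (m : ℕ) (f : E.unop ⟶ ⦋m+1⦌) (j : Fin (m+2)) :
    E.unop ⟶ ⦋m⦌ := factor_δ (m := E.unop.len) f j

example (E : SimplexCategoryᵒᵖ) (m : ℕ) (X : SSet.{u}) (f : E.unop ⟶ ⦋m⦌) (z : X.obj (op ⦋m⦌)) :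
    X.obj E := X.map f.op z

end KanColimAux

namespace KanColimAux
open SSet SimplexCategory

section HornMk

variable {m : ℕ} (k : Fin (m+2))

lemma hsel {E : SimplexCategoryᵒᵖ} (α : (Λ[m+1, k] : SSet.{u}).obj E) :
    ∃ j : Fin (m+2),
      (∀ t, (stdSimplex.objEquiv α.1).toOrderHom t ≠ j) ∧ j ≠ k := by
  obtain ⟨j, hj⟩ := Set.ne_univ_iff_exists_notMem _ |>.mp α.2
  simp only [Set.mem_union, Set.mem_range, Set.mem_singleton_iff, not_or, not_exists] at hj
  exact ⟨j, fun t h => hj.1 t h, hj.2⟩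

variable (X : SSet.{u}) (x : Fin (m+2) → X.obj (op ⦋m⦌))

/-- Independence hypothesis. -/
def IndepH : Prop :=
  ∀ (E : SimplexCategoryᵒᵖ) (β : E.unop ⟶ ⦋m+1⦌) (j j' : Fin (m+2)),
      j ≠ k → j' ≠ k → (∀ t, β.toOrderHom t ≠ j) → (∀ t, β.toOrderHom t ≠ j') →
      X.map (factor_δ (m := E.unop.len) β j).op (x j)
        = X.map (factor_δ (m := E.unop.len) β j').op (x j')

/-- The app component of the horn morphism. -/
noncomputable def hornMkApp (E : SimplexCategoryᵒᵖ) (α : (Λ[m+1, k] : SSet.{u}).obj E) : X.obj E :=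
  X.map (factor_δ (m := E.unop.len) (stdSimplex.objEquiv α.1)
      (hsel k α).choose).op (x (hsel k α).choose)

lemma hornMkApp_eq (H : IndepH k X x) {E : SimplexCategoryᵒᵖ} (α : (Λ[m+1, k] : SSet.{u}).obj E)
    (j : Fin (m+2)) (hjk : j ≠ k)
    (hmiss : ∀ t, (stdSimplex.objEquiv α.1).toOrderHom t ≠ j) :
    hornMkApp k X x E α
      = X.map (factor_δ (m := E.unop.len) (stdSimplex.objEquiv α.1) j).op (x j) := by
  obtain ⟨hmiss₀, hne₀⟩ := (hsel k α).choose_spec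
  exact H E _ _ j hne₀ hjk hmiss₀ hmiss

/-- The horn morphism built from compatible faces. -/
noncomputable def hornMk (H : IndepH k X x) : (Λ[m+1, k] : SSet.{u}) ⟶ X where
  app E := TypeCat.ofHom fun α => hornMkApp k X x E α
  naturality E E' f := by
    ext α
    show hornMkApp k X x E' ((Λ[m+1, k] : SSet.{u}).map f α) = X.map f (hornMkApp k X x E α)
    set α' := (Λ[m+1, k] : SSet.{u}).map f α with hα'
    set β := stdSimplex.objEquiv α.1 with hβ
    have hβ' : stdSimplex.objEquiv α'.1 = f.unop ≫ β := by
      rfl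
    obtain ⟨hmiss, hne⟩ := (hsel k α).choose_spec
    have hmiss₂ : ∀ t, (stdSimplex.objEquiv α'.1).toOrderHom t
        ≠ (hsel k α).choose := by
      intro t
      rw [hβ']
      exact fun h => hmiss _ h
    rw [hornMkApp_eq k X x H α' (hsel k α).choose hne hmiss₂]
    have hfac : factor_δ (m := E'.unop.len) (stdSimplex.objEquiv α'.1)
        (hsel k α).choose = f.unop ≫ factor_δ (m := E.unop.len) β (hsel k α).choose := by
      rw [hβ']
      dsimp [factor_δ]
      rw [Category.assoc]
    rw [hfac]
    have hop : (f.unop ≫ factor_δ (m := E.unop.len) β (hsel k α).choose).op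
        = (factor_δ (m := E.unop.len) β (hsel k α).choose).op ≫ f := by
      rw [op_comp, Quiver.Hom.op_unop]
    rw [hop, FunctorToTypes.map_comp_apply]
    rfl

lemma hornMk_face (H : IndepH k X x) (j : Fin (m+2)) (hj : j ≠ k) :
    (hornMk k X x H).app (op ⦋m⦌) (SSet.horn.face k j hj) = x j := by
  have hund : stdSimplex.objEquiv (SSet.horn.face k j hj).1 = δ j := by
    rfl
  have hmiss : ∀ t, (stdSimplex.objEquiv (SSet.horn.face k j hj).1).toOrderHom t
      ≠ j := by
    rw [hund]
    intro t
    exact Fin.succAbove_ne j t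
  show hornMkApp k X x _ _ = x j
  rw [hornMkApp_eq k X x H _ j hj hmiss]
  have hid : factor_δ (m := (unop (op (⦋m⦌ : SimplexCategory))).len)
      (stdSimplex.objEquiv
      (SSet.horn.face k j hj).1) j = 𝟙 (⦋m⦌ : SimplexCategory) := by
    rw [← cancel_mono (δ j), factor_δ_spec _ j hmiss, hund]
    simp
  rw [hid]
  simp

end HornMk

end KanColimAux

namespace KanColimAux
open SSet SimplexCategory

section PairToH

variable {m : ℕ} (k : Fin (m+3)) (X : SSet.{u}) (x : Fin (m+3) → X.obj (op ⦋m+1⦌))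

/-- Pairwise compatibility of the faces. -/
def PairH : Prop :=
  ∀ (a b : Fin (m+2)) (j j' : Fin (m+3)), (a : ℕ) = j → (b : ℕ) + 1 = j' → a ≤ b →
    j ≠ k → j' ≠ k → X.map (δ a).op (x j') = X.map (δ b).op (x j)

lemma pair_to_H_core (P : PairH k X x)
    (E : SimplexCategoryᵒᵖ) (β : E.unop ⟶ ⦋m+2⦌) (j j' : Fin (m+3))
    (hj : j ≠ k) (hj' : j' ≠ k) (hbj : ∀ t, β.toOrderHom t ≠ j)
    (hbj' : ∀ t, β.toOrderHom t ≠ j') (hlt : j < j') :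
    X.map (factor_δ (m := E.unop.len) β j).op (x j)
      = X.map (factor_δ (m := E.unop.len) β j').op (x j') := by
  have hltv : (j : ℕ) < (j' : ℕ) := hlt
  have hj'2 : (j' : ℕ) < m + 3 := j'.isLt
  set a : Fin (m+2) := ⟨(j : ℕ), by omega⟩ with ha
  set b : Fin (m+2) := ⟨(j' : ℕ) - 1, by omega⟩ with hb
  set γ' := factor_δ (m := E.unop.len) β j' with hγ'
  have sγ' : γ' ≫ δ j' = β := factor_δ_spec (m := E.unop.len) β j' hbj'
  have hγ'a : ∀ t, γ'.toOrderHom t ≠ a := by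
    intro t ht
    apply hbj t
    have hcomp : β.toOrderHom t = (δ j').toOrderHom (γ'.toOrderHom t) := by
      rw [← sγ']; rfl
    rw [hcomp, ht]
    show j'.succAbove a = j
    rw [Fin.succAbove_of_castSucc_lt _ _ (by
      rw [Fin.lt_def]; simpa [ha] using hltv)]
    ext; simp [ha]
  set ε := factor_δ (m := E.unop.len) γ' a with hε'
  have sε : ε ≫ δ a = γ' := factor_δ_spec (m := E.unop.len) γ' a hγ'a
  set γ := factor_δ (m := E.unop.len) β j with hγ
  have sγ : γ ≫ δ j = β := factor_δ_spec (m := E.unop.len) β j hbj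
  have hγb : ∀ t, γ.toOrderHom t ≠ b := by
    intro t ht
    apply hbj' t
    have hcomp : β.toOrderHom t = (δ j).toOrderHom (γ.toOrderHom t) := by
      rw [← sγ]; rfl
    rw [hcomp, ht]
    show j.succAbove b = j'
    rw [Fin.succAbove_of_le_castSucc _ _ (by
      rw [Fin.le_def]; simp [hb]; omega)]
    ext; simp [hb]; omega
  set ε₂ := factor_δ (m := E.unop.len) γ b with hε₂'
  have sε₂ : ε₂ ≫ δ b = γ := factor_δ_spec (m := E.unop.len) γ b hγb
  have hkey : δ a ≫ δ j' = δ b ≫ δ j :=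
    delta_key a b j j' (by simp [ha]) (by simp [hb]; omega) (by
      rw [Fin.le_def]; simp [ha, hb]; omega)
  have hεε : ε = ε₂ := by
    rw [← cancel_mono (δ a ≫ δ j')]
    calc ε ≫ (δ a ≫ δ j') = (ε ≫ δ a) ≫ δ j' := by rw [Category.assoc]
      _ = β := by rw [sε, sγ']
      _ = (ε₂ ≫ δ b) ≫ δ j := by rw [sε₂, sγ]
      _ = ε₂ ≫ (δ b ≫ δ j) := by rw [Category.assoc]
      _ = ε₂ ≫ (δ a ≫ δ j') := by rw [hkey]
  calc X.map γ.op (x j) = X.map (ε₂ ≫ δ b).op (x j) := by rw [sε₂]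
    _ = X.map ε₂.op (X.map (δ b).op (x j)) := by
        rw [op_comp, FunctorToTypes.map_comp_apply]
    _ = X.map ε.op (X.map (δ a).op (x j')) := by
        rw [hεε, P a b j j' (by simp [ha]) (by simp [hb]; omega)
          (by rw [Fin.le_def]; simp [ha, hb]; omega) hj hj']
    _ = X.map (ε ≫ δ a).op (x j') := by rw [op_comp, FunctorToTypes.map_comp_apply]
    _ = X.map γ'.op (x j') := by rw [sε]

lemma pair_to_H (P : PairH k X x) : IndepH k X x := by
  intro E β j j' hj hj' hbj hbj'
  rcases lt_trichotomy j j' with h | h | h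
  · exact pair_to_H_core k X x P E β j j' hj hj' hbj hbj' h
  · subst h; rfl
  · exact (pair_to_H_core k X x P E β j' j hj' hj hbj' hbj h).symm

end PairToH

end KanColimAux

namespace KanColimAux
open SSet SimplexCategory

variable {I : Type u} [SmallCategory I] [IsFiltered I]

lemma exists_rep_delta (G : I ⥤ SSet.{u}) (n : ℕ) (v : Δ[n] ⟶ colimit G) :
    ∃ (j : I) (g : Δ[n] ⟶ G.obj j), g ≫ colimit.ι G j = v := by
  obtain ⟨j, y, hy⟩ := exists_rep G (op ⦋n⦌) (SSet.yonedaEquiv v)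
  refine ⟨j, SSet.yonedaEquiv.symm y, (SSet.yonedaEquiv (X := colimit G) (n := ⦋n⦌)).injective ?_⟩
  rw [yonedaEquiv_comp, Equiv.apply_symm_apply]
  exact hy

/-- A choice of an index different from `k`. -/
noncomputable def sel {m : ℕ} (k t : Fin (m+2)) : {j : Fin (m+2) // j ≠ k} :=
  if h : t = k then
    (if h0 : k = 0 then ⟨1, by simp [h0, Fin.ext_iff]⟩ else ⟨0, fun hh => h0 hh.symm⟩)
  else ⟨t, h⟩

lemma sel_ne {m : ℕ} (k t : Fin (m+2)) (h : t ≠ k) : sel k t = ⟨t, h⟩ := dif_neg h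

lemma exists_push_horn_eq (G : I ⥤ SSet.{u}) {m : ℕ} (k : Fin (m+2)) {i : I}
    (a b : (Λ[m+1, k] : SSet.{u}) ⟶ G.obj i)
    (h : a ≫ colimit.ι G i = b ≫ colimit.ι G i) :
    ∃ (i' : I) (f : i ⟶ i'), a ≫ G.map f = b ≫ G.map f := by
  obtain ⟨i', f, hf⟩ := exists_push_eq_fin G (op ⦋m⦌) (m+2) i
    (fun t => a.app _ (horn.face k (sel k t).1 (sel k t).2))
    (fun t => b.app _ (horn.face k (sel k t).1 (sel k t).2)) (by
      intro t
      exact congrArg (fun (τ : (Λ[m+1, k] : SSet.{u}) ⟶ colimit G) =>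
        τ.app (op ⦋m⦌) (horn.face k (sel k t).1 (sel k t).2)) h)
  refine ⟨i', f, ?_⟩
  apply SSet.horn.hom_ext
  intro j hj
  have := hf j
  rw [sel_ne k j hj] at this
  exact this

lemma hornMk_comp_eq (F : I ⥤ SSet.{u}) {m : ℕ} {k : Fin (m+2)} {i : I}
    (x : Fin (m+2) → (F.obj i).obj (op ⦋m⦌)) (H : IndepH k (F.obj i) x)
    (u : (Λ[m+1, k] : SSet.{u}) ⟶ colimit F)
    (hx : ∀ (j : Fin (m+2)) (hj : j ≠ k),
      (colimit.ι F i).app (op ⦋m⦌) (x j) = u.app (op ⦋m⦌) (horn.face k j hj)) :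
    hornMk k (F.obj i) x H ≫ colimit.ι F i = u := by
  apply SSet.horn.hom_ext
  intro j hj
  show (colimit.ι F i).app _ ((hornMk k (F.obj i) x H).app _ (horn.face k j hj)) = _
  rw [hornMk_face]
  exact hx j hj

end KanColimAux

namespace KanColimAux
open SSet SimplexCategory

lemma face_congr {n : ℕ} (i : Fin (n+2)) {a j : Fin (n+2)} (ha : a ≠ i) (hj : j ≠ i)
    (h : a = j) : SSet.horn.face i a ha = SSet.horn.face i j hj := by
  subst h; rfl

variable {I : Type u} [SmallCategory I] [IsFiltered I]

lemma exists_rep_horn (F : I ⥤ SSet.{u}) {m : ℕ} (k : Fin (m+2))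
    (u : (Λ[m+1, k] : SSet.{u}) ⟶ colimit F) :
    ∃ (i : I) (u' : (Λ[m+1, k] : SSet.{u}) ⟶ F.obj i), u' ≫ colimit.ι F i = u := by
  obtain ⟨i₀, x₀, hx₀⟩ := exists_rep_fin F (op ⦋m⦌) (m+2)
    (fun t => u.app (op ⦋m⦌) (horn.face k (sel k t).1 (sel k t).2))
  have hx₀' : ∀ (j : Fin (m+2)) (hj : j ≠ k),
      (colimit.ι F i₀).app (op ⦋m⦌) (x₀ j) = u.app (op ⦋m⦌) (horn.face k j hj) := by
    intro j hj
    rw [hx₀ j]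
    show u.app (op ⦋m⦌) (horn.face k (sel k j).1 (sel k j).2) = _
    exact congrArg _ (face_congr k _ hj (congrArg Subtype.val (sel_ne k j hj)))
  rcases m with _ | m'
  · -- m = 0
    have H : IndepH k (F.obj i₀) x₀ := by
      intro E β j j' hj hj' hbj hbj'
      have hjj : j = j' := by
        have h1 : (j : ℕ) < 2 := j.isLt
        have h2 : (j' : ℕ) < 2 := j'.isLt
        have h3 : (k : ℕ) < 2 := k.isLt
        have h4 : (j : ℕ) ≠ (k : ℕ) := fun hh => hj (Fin.ext hh)
        have h5 : (j' : ℕ) ≠ (k : ℕ) := fun hh => hj' (Fin.ext hh)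
        exact Fin.ext (by omega)
      subst hjj
      rfl
    exact ⟨i₀, hornMk k (F.obj i₀) x₀ H, hornMk_comp_eq F x₀ H u hx₀'⟩
  · -- m = m' + 1
    classical
    obtain ⟨i₁, f, hpush⟩ := exists_push_eq_fin F (op ⦋m'⦌) ((m'+3) * (m'+3)) i₀
      (fun t =>
        if h : ((finProdFinEquiv.symm t).1 : ℕ) < ((finProdFinEquiv.symm t).2 : ℕ)
            ∧ (finProdFinEquiv.symm t).1 ≠ k ∧ (finProdFinEquiv.symm t).2 ≠ k then
          (F.obj i₀).map (δ (⟨((finProdFinEquiv.symm t).1 : ℕ), by omega⟩ : Fin (m'+2))).op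
            (x₀ (finProdFinEquiv.symm t).2)
        else (F.obj i₀).map (δ (0 : Fin (m'+2))).op (x₀ 0))
      (fun t =>
        if h : ((finProdFinEquiv.symm t).1 : ℕ) < ((finProdFinEquiv.symm t).2 : ℕ)
            ∧ (finProdFinEquiv.symm t).1 ≠ k ∧ (finProdFinEquiv.symm t).2 ≠ k then
          (F.obj i₀).map (δ (⟨((finProdFinEquiv.symm t).2 : ℕ) - 1, by omega⟩ : Fin (m'+2))).op
            (x₀ (finProdFinEquiv.symm t).1)
        else (F.obj i₀).map (δ (0 : Fin (m'+2))).op (x₀ 0))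
      (by
        intro t
        beta_reduce
        split
        · -- the relation holds in the colimit
          rename_i h
          obtain ⟨hlt, hj, hj'⟩ := h
          set j := (finProdFinEquiv.symm t).1 with hjdef
          set j' := (finProdFinEquiv.symm t).2 with hj'def
          set a : Fin (m'+2) := ⟨(j : ℕ), by omega⟩ with hadef
          set b : Fin (m'+2) := ⟨(j' : ℕ) - 1, by omega⟩ with hbdef
          have hc1 : (a : ℕ) = (j : ℕ) := rfl
          have hc2 : (b : ℕ) + 1 = (j' : ℕ) := by
            show ((j' : ℕ) - 1) + 1 = (j' : ℕ); omega
          have hc3 : a ≤ b := by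
            rw [Fin.le_def]; show (j : ℕ) ≤ (j' : ℕ) - 1; omega
          have hface : (Λ[m'+1+1, k] : SSet.{u}).map (δ a).op (horn.face k j' hj')
              = (Λ[m'+1+1, k] : SSet.{u}).map (δ b).op (horn.face k j hj) := by
            apply Subtype.ext
            show Δ[m'+1+1].map (δ a).op ((stdSimplex.objEquiv).symm (δ j'))
              = Δ[m'+1+1].map (δ b).op ((stdSimplex.objEquiv).symm (δ j))
            simp only [stdSimplex.map_apply, Equiv.apply_symm_apply]
            apply congrArg
            exact delta_key a b j j' hc1 hc2 hc3
          calc (colimit.ι F i₀).app (op ⦋m'⦌) ((F.obj i₀).map (δ a).op (x₀ j'))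
              = (colimit F).map (δ a).op ((colimit.ι F i₀).app (op ⦋m'+1⦌) (x₀ j')) :=
                NatTrans.naturality_apply (colimit.ι F i₀) (δ a).op (x₀ j')
            _ = (colimit F).map (δ a).op (u.app (op ⦋m'+1⦌) (horn.face k j' hj')) := by
                rw [hx₀' j' hj']
            _ = u.app (op ⦋m'⦌) ((Λ[m'+1+1, k] : SSet.{u}).map (δ a).op (horn.face k j' hj')) :=
                (NatTrans.naturality_apply u (δ a).op _).symm
            _ = u.app (op ⦋m'⦌) ((Λ[m'+1+1, k] : SSet.{u}).map (δ b).op (horn.face k j hj)) := by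
                rw [hface]
            _ = (colimit F).map (δ b).op (u.app (op ⦋m'+1⦌) (horn.face k j hj)) :=
                NatTrans.naturality_apply u (δ b).op _
            _ = (colimit F).map (δ b).op ((colimit.ι F i₀).app (op ⦋m'+1⦌) (x₀ j)) := by
                rw [hx₀' j hj]
            _ = (colimit.ι F i₀).app (op ⦋m'⦌) ((F.obj i₀).map (δ b).op (x₀ j)) :=
                (NatTrans.naturality_apply (colimit.ι F i₀) (δ b).op (x₀ j)).symm
        · rfl)
    have P : PairH k (F.obj i₁) (fun j => (F.map f).app (op ⦋m'+1⦌) (x₀ j)) := by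
      intro a b j j' haj hbj' hab hj hj'
      have hab' : (a : ℕ) ≤ (b : ℕ) := hab
      have hc : ((j : ℕ) < (j' : ℕ)) ∧ j ≠ k ∧ j' ≠ k := ⟨by omega, hj, hj'⟩
      have hp := hpush (finProdFinEquiv (j, j'))
      simp only [Equiv.symm_apply_apply] at hp
      rw [dif_pos hc, dif_pos hc] at hp
      have hp2 : (F.obj i₁).map (δ (⟨(j : ℕ), by omega⟩ : Fin (m'+2))).op
            ((F.map f).app (op ⦋m'+1⦌) (x₀ j'))
          = (F.obj i₁).map (δ (⟨(j' : ℕ) - 1, by omega⟩ : Fin (m'+2))).op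
            ((F.map f).app (op ⦋m'+1⦌) (x₀ j)) := by
        rw [← NatTrans.naturality_apply (F.map f),
          ← NatTrans.naturality_apply (F.map f)]
        exact hp
      have ha' : a = (⟨(j : ℕ), by omega⟩ : Fin (m'+2)) := Fin.ext haj
      have hb' : b = (⟨(j' : ℕ) - 1, by omega⟩ : Fin (m'+2)) := Fin.ext (by
        show (b : ℕ) = (j' : ℕ) - 1; omega)
      show (F.obj i₁).map (δ a).op ((F.map f).app (op ⦋m'+1⦌) (x₀ j'))
        = (F.obj i₁).map (δ b).op ((F.map f).app (op ⦋m'+1⦌) (x₀ j))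
      rw [ha', hb']
      exact hp2
    have H : IndepH k (F.obj i₁) (fun j => (F.map f).app (op ⦋m'+1⦌) (x₀ j)) :=
      pair_to_H k _ _ P
    refine ⟨i₁, hornMk k (F.obj i₁) _ H, hornMk_comp_eq F _ H u ?_⟩
    intro j hj
    show (colimit.ι F i₁).app (op ⦋m'+1⦌) ((F.map f).app (op ⦋m'+1⦌) (x₀ j)) = _
    rw [ι_push]
    exact hx₀' j hj

end KanColimAux


theorem main_lift {I : Type u} [SmallCategory I] [IsFiltered I]
    (F G : I ⥤ SSet.{u}) (η : F ⟶ G)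
    (hη : ∀ i : I, ∀ ⦃n : ℕ⦄, 1 ≤ n → ∀ k : Fin (n + 1),
      HasLiftingProperty ((SSet.horn n k).ι) (η.app i)) :
    ∀ ⦃n : ℕ⦄, 1 ≤ n → ∀ k : Fin (n + 1),
      HasLiftingProperty ((SSet.horn n k).ι) (colimMap η) := by
  intro n hn k
  obtain ⟨m, rfl⟩ : ∃ m, n = m + 1 := ⟨n - 1, by omega⟩
  constructor
  intro u v sq
  obtain ⟨i₀, u', hu'⟩ := KanColimAux.exists_rep_horn F k u
  obtain ⟨j₀, g, hg⟩ := KanColimAux.exists_rep_delta G (m+1) v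
  set i₁ := IsFiltered.max i₀ j₀ with hi₁
  set u₁ := u' ≫ F.map (IsFiltered.leftToMax i₀ j₀) with hu₁def
  set g₁ := g ≫ G.map (IsFiltered.rightToMax i₀ j₀) with hg₁def
  have hu₁ : u₁ ≫ colimit.ι F i₁ = u := by
    rw [hu₁def, Category.assoc, colimit.w]; exact hu'
  have hg₁ : g₁ ≫ colimit.ι G i₁ = v := by
    rw [hg₁def, Category.assoc, colimit.w]; exact hg
  have hsq : (u₁ ≫ η.app i₁) ≫ colimit.ι G i₁
      = ((SSet.horn (m+1) k).ι ≫ g₁) ≫ colimit.ι G i₁ := by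
    rw [Category.assoc, ← ι_colimMap, ← Category.assoc, hu₁, sq.w, ← hg₁]
    simp [hg₁def]
  obtain ⟨i₂, f, hf⟩ := KanColimAux.exists_push_horn_eq G k (u₁ ≫ η.app i₁)
    ((SSet.horn (m+1) k).ι ≫ g₁) hsq
  have hsq₂ : CommSq (u₁ ≫ F.map f) ((SSet.horn (m+1) k).ι) (η.app i₂)
      (g₁ ≫ G.map f) := by
    constructor
    rw [Category.assoc, η.naturality f, ← Category.assoc, ← Category.assoc]
    rw [Category.assoc u₁ (η.app i₁) (G.map f)] at hf
    rw [← Category.assoc] at hf ⊢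
    exact hf
  haveI := hη i₂ (n := m+1) (by omega) k
  refine ⟨⟨⟨hsq₂.lift ≫ colimit.ι F i₂, ?_, ?_⟩⟩⟩
  · rw [← Category.assoc, hsq₂.fac_left, Category.assoc, colimit.w]
    exact hu₁
  · rw [Category.assoc, ι_colimMap, ← Category.assoc, hsq₂.fac_right, Category.assoc,
      colimit.w]
    exact hg₁

/-- A filtered colimit of Kan fibrations between Kan complexes is a Kan fibration. -/
theorem kanFibration_colimMap_of_filtered {I : Type u} [SmallCategory I] [IsFiltered I]
    (F G : I ⥤ SSet.{u}) (hF : ∀ i : I, IsKanComplex (F.obj i))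
    (hG : ∀ i : I, IsKanComplex (G.obj i))
    (η : F ⟶ G) (hη : ∀ i : I, KanFibration (η.app i)) :
    KanFibration (colimMap η) :=
  main_lift F G η hη
end

section
/- Let C be a category and consider a commutative square f ∘ p = g ∘ q, where p : r ⟶ s, q : r ⟶ t, f : s ⟶ w, g : t ⟶ w. Suppose there are sections a : s ⟶ r with p ∘ a = 𝟙_s, c : t ⟶ r with q ∘ c = 𝟙_t, and b : w ⟶ t with g ∘ b = 𝟙_w, satisfying the compatibility q ∘ a = b ∘ f. Then the square is an absolute pushout: it is a pushout square in C, and for every functor F : C ⥤ D into any category D, the image square F(f) ∘ F(p) = F(g) ∘ F(q) is a pushout square in D. -/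
universe v u v' u'

open CategoryTheory

open CategoryTheory.Limits in
/-- Auxiliary lemma: the pushout property from compatible sections, in any category. -/
theorem isPushout_of_sections_aux {C : Type*} [Category C] {r s t w : C}
    (p : r ⟶ s) (q : r ⟶ t) (f : s ⟶ w) (g : t ⟶ w) (comm : p ≫ f = q ≫ g)
    (a : s ⟶ r) (ha : a ≫ p = 𝟙 s)
    (c : t ⟶ r) (hc : c ≫ q = 𝟙 t)
    (b : w ⟶ t) (hb : b ≫ g = 𝟙 w)
    (compat : a ≫ q = f ≫ b) :
    IsPushout p q f g := by
  have hq : Epi q := ⟨fun u v h => by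
    have := congrArg (c ≫ ·) h
    simpa [← Category.assoc, hc] using this⟩
  refine IsPushout.of_isColimit' ⟨comm⟩ (PushoutCocone.IsColimit.mk _
    (fun sc => b ≫ sc.inr) (fun sc => ?_) (fun sc => ?_) (fun sc m hl hr => ?_))
  · show f ≫ b ≫ sc.inr = sc.inl
    rw [← Category.assoc, ← compat, Category.assoc, ← sc.condition, ← Category.assoc, ha,
      Category.id_comp]
  · show g ≫ b ≫ sc.inr = sc.inr
    have key : f ≫ b ≫ sc.inr = sc.inl := by
      rw [← Category.assoc, ← compat, Category.assoc, ← sc.condition, ← Category.assoc, ha,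
        Category.id_comp]
    apply hq.left_cancellation
    rw [← Category.assoc, ← comm, Category.assoc, key, sc.condition]
  · show m = b ≫ sc.inr
    rw [← hr, ← Category.assoc, hb, Category.id_comp]

/-- A commutative square equipped with compatible sections of `p`, `q` and `g` is an
absolute pushout: it is a pushout, and it remains a pushout after applying any functor. -/
theorem absolute_pushout_of_sections {C : Type u} [Category.{v} C] {r s t w : C}
    (p : r ⟶ s) (q : r ⟶ t) (f : s ⟶ w) (g : t ⟶ w) (comm : p ≫ f = q ≫ g)
    (a : s ⟶ r) (ha : a ≫ p = 𝟙 s)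
    (c : t ⟶ r) (hc : c ≫ q = 𝟙 t)
    (b : w ⟶ t) (hb : b ≫ g = 𝟙 w)
    (compat : a ≫ q = f ≫ b) :
    IsPushout p q f g ∧
      ∀ {D : Type u'} [Category.{v'} D] (F : C ⥤ D),
        IsPushout (F.map p) (F.map q) (F.map f) (F.map g) := by
  refine ⟨isPushout_of_sections_aux p q f g comm a ha c hc b hb compat, ?_⟩
  intro D _ F
  exact isPushout_of_sections_aux (F.map p) (F.map q) (F.map f) (F.map g)
    (by rw [← F.map_comp, ← F.map_comp, comm])
    (F.map a) (by rw [← F.map_comp, ha, F.map_id])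
    (F.map c) (by rw [← F.map_comp, hc, F.map_id])
    (F.map b) (by rw [← F.map_comp, hb, F.map_id])
    (by rw [← F.map_comp, ← F.map_comp, compat])
end

section
/- Let Φ : SSet ⥤ SSet be a functor that preserves Kan fibrations (i.e. Φ.map f is a Kan fibration whenever f is) and such that Φ(⊤) is a Kan complex, where ⊤ denotes the terminal simplicial set. Consider the tower ⋯ ⟶ Φ³(⊤) ⟶ Φ²(⊤) ⟶ Φ(⊤) ⟶ ⊤ whose transition morphism Φⁿ⁺¹(⊤) ⟶ Φⁿ(⊤) is Φⁿ applied to the unique morphism Φ(⊤) ⟶ ⊤. Then the limit of this tower is a Kan complex. (In particular, if Φ has a terminal coalgebra whose underlying simplicial set is this limit, then that terminal coalgebra is fibrant.) -/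
universe u

open CategoryTheory Simplicial CategoryTheory.Limits Opposite

/-- The objects `Φⁿ(⊤)` of the tower associated to an endofunctor `Φ` of simplicial
sets, starting at the terminal simplicial set. -/
noncomputable def towerObj (Φ : SSet.{u} ⥤ SSet.{u}) : ℕ → SSet.{u}
| 0 => ⊤_ SSet.{u}
| n + 1 => Φ.obj (towerObj Φ n)

/-- The transition morphisms `Φⁿ⁺¹(⊤) ⟶ Φⁿ(⊤)` of the tower: `Φⁿ` applied to the
unique morphism `Φ(⊤) ⟶ ⊤`. -/
noncomputable def towerMap (Φ : SSet.{u} ⥤ SSet.{u}) :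
    ∀ n : ℕ, towerObj Φ (n + 1) ⟶ towerObj Φ n
| 0 => terminal.from _
| n + 1 => Φ.map (towerMap Φ n)

/-- The tower `⋯ ⟶ Φ²(⊤) ⟶ Φ(⊤) ⟶ ⊤` as a functor `ℕᵒᵖ ⥤ SSet`. -/
noncomputable def tower (Φ : SSet.{u} ⥤ SSet.{u}) : ℕᵒᵖ ⥤ SSet.{u} :=
  (Functor.ofSequence (fun n => (towerMap Φ n).op)).leftOp


/-- Any two morphisms into `Δ[0]` are equal. -/
lemma SSet.hom_to_deltaZero_ext {X : SSet.{u}} (f g : X ⟶ Δ[0]) : f = g := by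
  ext m x

/-- `Δ[0]` is terminal. -/
noncomputable def SSet.isTerminalDeltaZero : IsTerminal (Δ[0] : SSet.{u}) :=
  IsTerminal.ofUniqueHom (fun X => X.ptMap) (fun X m => SSet.hom_to_deltaZero_ext _ _)

lemma kanFibration_terminalFrom_of_isKanComplex {X : SSet.{u}} (h : IsKanComplex X) :
    KanFibration (terminal.from X) := by
  intro n hn k
  have : HasLiftingProperty ((SSet.horn n k).ι) (SSet.ptMap X) := h hn k
  have e : (Δ[0] : SSet.{u}) ≅ ⊤_ SSet.{u} :=
    SSet.isTerminalDeltaZero.uniqueUpToIso terminalIsTerminal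
  have heq : terminal.from X = SSet.ptMap X ≫ e.hom := terminal.hom_ext _ _
  rw [heq]
  infer_instance

lemma kanFibration_towerMap (Φ : SSet.{u} ⥤ SSet.{u})
    (hΦ : ∀ {X Y : SSet.{u}} (f : X ⟶ Y), KanFibration f → KanFibration (Φ.map f))
    (hT : IsKanComplex (Φ.obj (⊤_ SSet.{u}))) :
    ∀ m, KanFibration (towerMap Φ m)
| 0 => kanFibration_terminalFrom_of_isKanComplex hT
| m + 1 => hΦ _ (kanFibration_towerMap Φ hΦ hT m)

lemma tower_map_succ (Φ : SSet.{u} ⥤ SSet.{u}) (m : ℕ) :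
    (tower Φ).map (homOfLE (Nat.le_add_right m 1)).op = towerMap Φ m :=
  Functor.ofOpSequence_map_homOfLE_succ (towerMap Φ) m

/-- The commutative square used to construct the inductive lifts. -/
lemma liftSq (Φ : SSet.{u} ⥤ SSet.{u}) {n : ℕ} (k : Fin (n + 1))
    (u : (Λ[n, k] : SSet.{u}) ⟶ limit (tower Φ)) (m : ℕ)
    {g : (Δ[n] : SSet.{u}) ⟶ towerObj Φ m}
    (hg : (SSet.horn n k).ι ≫ g = u ≫ limit.π (tower Φ) (op m)) :
    CommSq (u ≫ limit.π (tower Φ) (op (m + 1))) ((SSet.horn n k).ι)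
      (towerMap Φ m) g := by
  constructor
  rw [hg]
  simp only [Category.assoc, ← tower_map_succ Φ m, limit.w]
  exact (Category.assoc _ _ _).trans (congrArg (fun t => u ≫ t) (limit.w (tower Φ) _))

/-- Inductively constructed lifts at each level of the tower. -/
noncomputable def liftAux (Φ : SSet.{u} ⥤ SSet.{u})
    (fib : ∀ m, KanFibration (towerMap Φ m))
    {n : ℕ} (hn : 1 ≤ n) (k : Fin (n + 1))
    (u : (Λ[n, k] : SSet.{u}) ⟶ limit (tower Φ)) :
    ∀ m : ℕ, {g : (Δ[n] : SSet.{u}) ⟶ towerObj Φ m //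
      (SSet.horn n k).ι ≫ g = u ≫ limit.π (tower Φ) (op m)}
| 0 => ⟨terminal.from _, terminal.hom_ext _ _⟩
| m + 1 =>
    have : HasLiftingProperty ((SSet.horn n k).ι) (towerMap Φ m) := fib m hn k
    have sq := liftSq Φ k u m (liftAux Φ fib hn k u m).2
    have hl := this.sq_hasLift sq
    ⟨hl.exists_lift.some.l, hl.exists_lift.some.fac_left⟩

lemma liftAux_compat (Φ : SSet.{u} ⥤ SSet.{u})
    (fib : ∀ m, KanFibration (towerMap Φ m))
    {n : ℕ} (hn : 1 ≤ n) (k : Fin (n + 1))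
    (u : (Λ[n, k] : SSet.{u}) ⟶ limit (tower Φ)) (m : ℕ) :
    (liftAux Φ fib hn k u (m + 1)).1 ≫ towerMap Φ m = (liftAux Φ fib hn k u m).1 := by
  have : HasLiftingProperty ((SSet.horn n k).ι) (towerMap Φ m) := fib m hn k
  have sq := liftSq Φ k u m (liftAux Φ fib hn k u m).2
  have hl := this.sq_hasLift sq
  exact hl.exists_lift.some.fac_right

/-- If `Φ` preserves Kan fibrations and `Φ(⊤)` is a Kan complex, then the limit of the
tower `⋯ ⟶ Φ²(⊤) ⟶ Φ(⊤) ⟶ ⊤` is a Kan complex. -/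
theorem isKanComplex_limit_of_tower (Φ : SSet.{u} ⥤ SSet.{u})
    (hΦ : ∀ {X Y : SSet.{u}} (f : X ⟶ Y), KanFibration f → KanFibration (Φ.map f))
    (hT : IsKanComplex (Φ.obj (⊤_ SSet.{u}))) :
    IsKanComplex (limit (tower Φ)) := by
  have fib := kanFibration_towerMap Φ hΦ hT
  intro n hn k
  constructor
  intro u v sq
  constructor
  constructor
  let c : Cone (tower Φ) :=
    { pt := Δ[n]
      π := NatTrans.ofOpSequence (fun m => (liftAux Φ fib hn k u m).1) (by
        intro m
        dsimp
        simp only [Category.id_comp, tower_map_succ Φ m, liftAux_compat]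
        exact (Category.id_comp _).trans (liftAux_compat Φ fib hn k u m).symm) }
  refine ⟨limit.lift (tower Φ) c, ?_, SSet.hom_to_deltaZero_ext _ _⟩
  apply limit.hom_ext
  intro j
  obtain ⟨m⟩ := j
  rw [Category.assoc, limit.lift_π]
  exact (liftAux Φ fib hn k u m).2
end
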